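/- Let Z, A, Y be binary random variables whose joint law is the margin of the linear-structural instrumental variable model: U is a real random variable with finite support, A is binary with p(a | z, u) strictly positive, and Y = β·A + g(U) + ε with E[ε] = 0, ε independent of (Z, U, A), and Z independent of U. Assume E[A | Z=1] ≠ E[A | Z=0]. Then (E[Y | Z=1] − E[Y | Z=0]) / (E[A | Z=1] − E[A | Z=0]) = β, which equals E[Y | do(a=1)] − E[Y | do(a=0)]. -/
import Mathlib


open Finset

/-- In the linear-structural binary IV model (`Z ⊥ U`, `ε ⊥ (Z, U, A)`,
`E[ε] = 0`, `Y = β·A + g(U) + ε`), the Wald ratio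
`(E[Y | Z=1] − E[Y | Z=0]) / (E[A | Z=1] − E[A | Z=0])` equals `β`, which is
`E[Y | do(a=1)] − E[Y | do(a=0)]`. -/
theorem stmt_11
    {U E : Type*} [Fintype U] [Fintype E]
    (β : ℝ) (g : U → ℝ) (eps : E → ℝ)
    (pZ : Bool → ℝ) (pU : U → ℝ) (pA : Bool → Bool → U → ℝ) (pE : E → ℝ)
    (hpZ : ∀ z, 0 < pZ z) (hpU : ∀ u, 0 < pU u)
    (hpA : ∀ a z u, 0 < pA a z u) (hpE : ∀ e, 0 < pE e)
    (hpZn : ∑ z, pZ z = 1) (hpUn : ∑ u, pU u = 1)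
    (hpAn : ∀ z u, ∑ a, pA a z u = 1) (hpEn : ∑ e, pE e = 1)
    (hEeps : ∑ e, pE e * eps e = 0)
    -- structural outcome: Y(z, u, a, e) = β·A + g(U) + ε
    (Yval : Bool → U → Bool → E → ℝ)
    (hY : ∀ z u a e, Yval z u a e = β * (if a then 1 else 0) + g u + eps e)
    -- joint law of (Z, U, A, ε); Z ⊥ U and ε ⊥ (Z, U, A) are encoded in the product form
    (q : Bool → U → Bool → E → ℝ)
    (hq : ∀ z u a e, q z u a e = pZ z * pU u * pA a z u * pE e)
    (EY : Bool → ℝ)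
    (hEY : ∀ z, EY z = (∑ u, ∑ a, ∑ e, q z u a e * Yval z u a e) /
      (∑ u, ∑ a, ∑ e, q z u a e))
    (EA : Bool → ℝ)
    (hEA : ∀ z, EA z = (∑ u, ∑ a, ∑ e, q z u a e * (if a then 1 else 0)) /
      (∑ u, ∑ a, ∑ e, q z u a e))
    (hrel : EA true ≠ EA false)
    (doMean : ℝ → ℝ)
    (hdo : ∀ aval, doMean aval = β * aval + ∑ u, pU u * g u) :
    (EY true - EY false) / (EA true - EA false) = β ∧
    β = doMean 1 - doMean 0 := by

  have hden : ∀ z, (∑ u, ∑ a, ∑ e, q z u a e) = pZ z := by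
    intro z
    simp only [hq, ← Finset.mul_sum, hpEn, mul_one, hpAn, hpUn]
  have hnum : ∀ z, (∑ u, ∑ a, ∑ e, q z u a e * Yval z u a e)
      = β * (∑ u, ∑ a, ∑ e, q z u a e * (if a then 1 else 0))
        + pZ z * ∑ u, pU u * g u := by
    intro z
    have h1 : ∀ u a, (∑ e, q z u a e * Yval z u a e)
        = β * (∑ e, q z u a e * (if a then 1 else 0))
          + pZ z * pU u * pA a z u * g u := by
      intro u a
      simp only [hq, hY, mul_add]
      rw [Finset.sum_add_distrib, Finset.sum_add_distrib]
      have e1 : (∑ e, pZ z * pU u * pA a z u * pE e * g u)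
          = pZ z * pU u * pA a z u * g u := by
        have : ∀ e, pZ z * pU u * pA a z u * pE e * g u
            = (pZ z * pU u * pA a z u * g u) * pE e := by intro e; ring
        simp only [this, ← Finset.mul_sum, hpEn, mul_one]
      have e2 : (∑ e, pZ z * pU u * pA a z u * pE e * eps e) = 0 := by
        have : ∀ e, pZ z * pU u * pA a z u * pE e * eps e
            = (pZ z * pU u * pA a z u) * (pE e * eps e) := by intro e; ring
        simp only [this, ← Finset.mul_sum, hEeps, mul_zero]
      have e3 : (∑ e, pZ z * pU u * pA a z u * pE e * (β * (if a then 1 else 0)))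
          = β * ∑ e, pZ z * pU u * pA a z u * pE e * (if a then 1 else 0) := by
        rw [Finset.mul_sum]; exact Finset.sum_congr rfl fun e _ => by ring
      rw [e1, e2, e3, add_zero]
    have h2 : ∀ u, (∑ a, ∑ e, q z u a e * Yval z u a e)
        = β * (∑ a, ∑ e, q z u a e * (if a then 1 else 0))
          + pZ z * (pU u * g u) := by
      intro u
      simp only [h1, Finset.sum_add_distrib, ← Finset.mul_sum]
      have : (∑ a, pZ z * pU u * pA a z u * g u)
          = pZ z * (pU u * g u) := by
        have : ∀ a, pZ z * pU u * pA a z u * g u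
            = (pZ z * (pU u * g u)) * pA a z u := by intro a; ring
        simp only [this, ← Finset.mul_sum, hpAn, mul_one]
      rw [this]
    simp only [h2, Finset.sum_add_distrib, ← Finset.mul_sum]
  have hEYz : ∀ z, EY z = β * EA z + ∑ u, pU u * g u := by
    intro z
    have hz : pZ z ≠ 0 := (hpZ z).ne'
    rw [hEY, hEA, hden, hnum, add_div, mul_div_assoc, mul_div_assoc]
    congr 1
    field_simp
  have hdiff : EA true - EA false ≠ 0 := sub_ne_zero_of_ne hrel
  constructor
  · rw [hEYz true, hEYz false]
    have : β * EA true + (∑ u, pU u * g u) - (β * EA false + ∑ u, pU u * g u)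
        = β * (EA true - EA false) := by ring
    rw [this, mul_div_assoc, div_self hdiff, mul_one]
  · rw [hdo, hdo]; ring
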